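/- Let p₁,...,p₄ be pairwise coprime integers ≥ 2 with ∑ⱼ 1/pⱼ < 1, P = ∏ⱼ pⱼ, and χ the period-2P function of the quadruple (1,1,1,1) (equal to -∏εⱼ at n ≡ P(1 + ∑εⱼ/pⱼ) mod 2P, else 0). Then -z^P ∏_{j=1}^{4}(z^{P/pⱼ} - z^{-P/pⱼ}) = ∑_{n=0}^{2P-1} χ(n)·z^n as Laurent polynomials in z. -/

import Mathlib

open Finset

/-- The sign ±1 attached to a boolean. -/
def sgn (b : Bool) : ℤ := if b then 1 else -1

/-- The periodic function `χ_{2P}^{ℓ}` of period `2P`: it takes the value `-∏ⱼ εⱼ`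
at `n ≡ P(1 + ∑ⱼ εⱼ ℓⱼ/pⱼ) = P + ∑ⱼ εⱼ (P/pⱼ) ℓⱼ (mod 2P)` and `0` otherwise. -/
def chi (p ℓ : Fin 4 → ℕ) (n : ℤ) : ℤ :=
  -∑ ε : Fin 4 → Bool, (∏ j, sgn (ε j)) *
    (if (n : ZMod (2 * ∏ j, p j)) =
        (((∏ j, p j : ℕ) : ℤ) + ∑ j, sgn (ε j) * ((∏ i, p i) / p j : ℕ) * (ℓ j : ℤ) : ℤ)
      then 1 else 0)

lemma cast_inj_of_lt {M a b : ℕ} (ha : a < M) (hb : b < M) :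
    ((a : ZMod M) = (b : ZMod M)) ↔ a = b := by
  constructor
  · intro h
    have := congrArg ZMod.val h
    rwa [ZMod.val_cast_of_lt ha, ZMod.val_cast_of_lt hb] at this
  · rintro rfl; rfl

lemma zpow_sum4 (z : ℂ) (hz : z ≠ 0) (a : Fin 4 → ℤ) :
    z ^ (∑ j, a j) = ∏ j, z ^ a j := by
  rw [Fin.sum_univ_four, Fin.prod_univ_four, zpow_add₀ hz, zpow_add₀ hz, zpow_add₀ hz]

theorem chi_generating_function (p : Fin 4 → ℕ)
    (hp : ∀ j, 2 ≤ p j) (hcop : ∀ i j, i ≠ j → Nat.Coprime (p i) (p j))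
    (hsum : (∑ j, (1 : ℚ) / p j) < 1) (z : ℂ) (hz : z ≠ 0) :
    -z ^ ((∏ j, p j : ℕ) : ℤ) *
        ∏ j, (z ^ (((∏ i, p i) / p j : ℕ) : ℤ) - z ^ (-(((∏ i, p i) / p j : ℕ) : ℤ)))
      = ∑ n ∈ Finset.range (2 * ∏ j, p j), (chi p (fun _ => 1) (n : ℤ) : ℂ) * z ^ (n : ℕ) := by
  classical
  have hp0 : ∀ j, 0 < p j := fun j => lt_of_lt_of_le two_pos (hp j)
  set P : ℕ := ∏ j, p j with hPdef
  set q : Fin 4 → ℕ := fun j => P / p j with hqdef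
  have hP : 0 < P := Finset.prod_pos (fun j _ => hp0 j)
  have hdvd : ∀ j, p j ∣ P := fun j => Finset.dvd_prod_of_mem p (Finset.mem_univ j)
  -- sum of q j is < P
  have hqP : (∑ j, q j) < P := by
    have h2 : ((∑ j, q j : ℕ) : ℚ) < (P : ℚ) := by
      push_cast
      have h1 : ∀ j, ((q j : ℚ)) = (P : ℚ) * (1 / (p j : ℚ)) := by
        intro j
        rw [hqdef]
        rw [Nat.cast_div (hdvd j) (by exact_mod_cast (hp0 j).ne')]
        ring
      calc (∑ j, (q j : ℚ)) = (P : ℚ) * ∑ j, 1 / (p j : ℚ) := by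
            rw [Finset.mul_sum]; exact Finset.sum_congr rfl fun j _ => h1 j
        _ < (P : ℚ) * 1 := mul_lt_mul_of_pos_left hsum (by exact_mod_cast hP)
        _ = (P : ℚ) := mul_one _
    exact_mod_cast h2
  -- the exponent attached to ε
  set S : (Fin 4 → Bool) → ℤ := fun ε => ∑ j, sgn (ε j) * (q j : ℤ) with hSdef
  have hSle : ∀ ε, S ε ≤ ∑ j, (q j : ℤ) := by
    intro ε
    apply Finset.sum_le_sum
    intro j _
    rcases (ε j) with _ | _ <;> simp [sgn] <;> positivity
  have hSge : ∀ ε, -(∑ j, (q j : ℤ)) ≤ S ε := by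
    intro ε
    rw [← Finset.sum_neg_distrib]
    apply Finset.sum_le_sum
    intro j _
    rcases (ε j) with _ | _ <;> simp [sgn] <;> positivity
  have hsumZ : (∑ j, (q j : ℤ)) < (P : ℤ) := by exact_mod_cast hqP
  set E : (Fin 4 → Bool) → ℤ := fun ε => (P : ℤ) + S ε with hEdef
  have hE0 : ∀ ε, 0 ≤ E ε := fun ε => by
    have := hSge ε; simp only [hEdef]; linarith
  have hE2 : ∀ ε, E ε < 2 * P := fun ε => by
    have := hSle ε; simp only [hEdef]; push_cast; linarith
  set N : (Fin 4 → Bool) → ℕ := fun ε => (E ε).toNat with hNdef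
  have hNE : ∀ ε, (N ε : ℤ) = E ε := fun ε => Int.toNat_of_nonneg (hE0 ε)
  have hN2 : ∀ ε, N ε < 2 * P := fun ε => by
    have h := hE2 ε
    have h1 := hNE ε
    omega
  -- LHS
  have lhs_eq : -z ^ ((P : ℕ) : ℤ) *
      ∏ j, (z ^ ((q j : ℕ) : ℤ) - z ^ (-((q j : ℕ) : ℤ)))
      = ∑ ε : Fin 4 → Bool, (-(∏ j, sgn (ε j) : ℤ) : ℂ) * z ^ (N ε : ℕ) := by
    have hfac : ∀ j : Fin 4, z ^ ((q j : ℕ) : ℤ) - z ^ (-((q j : ℕ) : ℤ))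
        = ∑ b : Bool, ((sgn b : ℂ) * z ^ (sgn b * (q j : ℤ))) := by
      intro j
      rw [Fintype.sum_bool]
      simp [sgn]
      ring
    calc -z ^ ((P : ℕ) : ℤ) * ∏ j, (z ^ ((q j : ℕ) : ℤ) - z ^ (-((q j : ℕ) : ℤ)))
        = -z ^ ((P : ℕ) : ℤ) *
            ∑ ε : Fin 4 → Bool, ∏ j, ((sgn (ε j) : ℂ) * z ^ (sgn (ε j) * (q j : ℤ))) := by
          rw [Finset.prod_congr rfl fun j _ => hfac j, Fintype.prod_sum]
      _ = ∑ ε : Fin 4 → Bool, (-(∏ j, sgn (ε j) : ℤ) : ℂ) * z ^ (N ε : ℕ) := by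
          rw [Finset.mul_sum]
          apply Finset.sum_congr rfl
          intro ε _
          rw [Finset.prod_mul_distrib, ← zpow_sum4 z hz]
          have hz1 : z ^ (N ε : ℕ) = z ^ (E ε) := by rw [← hNE ε, zpow_natCast]
          rw [hz1, hEdef]
          push_cast
          rw [zpow_add₀ hz]
          ring
  rw [lhs_eq]
  -- chi at n in range
  have hchi : ∀ n ∈ Finset.range (2 * P), (chi p (fun _ => 1) (n : ℤ))
      = -∑ ε : Fin 4 → Bool, (∏ j, sgn (ε j)) * (if n = N ε then 1 else 0) := by
    intro n hn
    rw [Finset.mem_range] at hn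
    simp only [chi, ← hPdef]
    congr 1
    apply Finset.sum_congr rfl
    intro ε _
    congr 1
    have hcond : (((n : ℤ) : ZMod (2 * P)) =
        (((P : ℕ) : ℤ) + ∑ j, sgn (ε j) * ((q j : ℕ) : ℤ) * ((1 : ℕ) : ℤ) : ℤ))
        ↔ n = N ε := by
      have heq : (((P : ℕ) : ℤ) + ∑ j, sgn (ε j) * ((q j : ℕ) : ℤ) * ((1 : ℕ) : ℤ) : ℤ)
          = E ε := by
        simp only [hEdef, hSdef, Nat.cast_one, mul_one]
      rw [heq, ← hNE ε]
      push_cast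
      exact cast_inj_of_lt hn (hN2 ε)
    simp only [Int.cast_natCast] at hcond ⊢
    rw [if_congr hcond rfl rfl]
  have key : ∀ n : ℕ,
      ((-∑ ε : Fin 4 → Bool, (∏ j, sgn (ε j)) * (if n = N ε then 1 else 0) : ℤ) : ℂ) * z ^ n
      = ∑ ε : Fin 4 → Bool, (-(∏ j, sgn (ε j) : ℤ) : ℂ) * (if n = N ε then z ^ n else 0) := by
    intro n
    push_cast
    rw [neg_mul, Finset.sum_mul, ← Finset.sum_neg_distrib]
    apply Finset.sum_congr rfl
    intro ε _
    by_cases h : n = N ε <;> simp [h] <;> ring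
  have rhs_eq : ∑ n ∈ Finset.range (2 * P), (chi p (fun _ => 1) (n : ℤ) : ℂ) * z ^ n
      = ∑ ε : Fin 4 → Bool, (-(∏ j, sgn (ε j) : ℤ) : ℂ) * z ^ (N ε : ℕ) := by
    rw [Finset.sum_congr rfl fun n hn => by rw [hchi n hn]]
    rw [Finset.sum_congr rfl fun n _ => key n, Finset.sum_comm]
    apply Finset.sum_congr rfl
    intro ε _
    rw [← Finset.mul_sum, Finset.sum_ite_eq' (Finset.range (2 * P)) (N ε) (fun n => z ^ n)]
    simp [Finset.mem_range.mpr (hN2 ε)]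
  rw [rhs_eq]
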